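/- arXiv:1801.01475 — 2 statements merged into one kernel-verified Lean document; each statement's English description precedes it below -/
import Mathlib

section
/- Suppose kernels K_i : [0,∞) → Matrix (Fin d) (Fin d) ℝ have each component bounded in L¹ norm by K⋆ < ∞, and the correlation functions satisfy |C̃_{ij}^{mn}(t,t')| < F(t-t') for a positive even integrable function F with ∫₀^∞ F = f⋆ < ∞. Then the limit as t → ∞ of |∫₀ᵗ ⟨δv^m(t) δv^n(s)⟩ ds|, where the integrand is the triple-integral expression ∑_{ij} ∫₀ᵗ ds₃ ∫₀ᵗ ds₁ ∫₀^{s₁} ds₂ K_i^{ml}(t-s₃) C̃_{ij}^{lk}(s₃,s₂) K_j^{nk}(s₁-s₂), is bounded by 2[(N+1) K⋆ d]² f⋆ < ∞. -/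
open Matrix MeasureTheory Filter


lemma even_aemeasurable {F : ℝ → ℝ} (hFint : IntegrableOn F (Set.Ioi 0))
    (hFeven : ∀ s, F (-s) = F s) : AEMeasurable F := by
  have h1 : AEMeasurable F (volume.restrict (Set.Ici 0)) := by
    rw [← Measure.restrict_congr_set Ioi_ae_eq_Ici]
    exact hFint.aemeasurable
  have habs : F = fun x => F |x| := by
    funext x
    rcases le_or_gt 0 x with h | h
    · rw [abs_of_nonneg h]
    · rw [abs_of_neg h, hFeven]
  have qmp : Measure.QuasiMeasurePreserving (fun x : ℝ => |x|) volume
      (volume.restrict (Set.Ici 0)) := by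
    refine ⟨measurable_abs, Measure.AbsolutelyContinuous.mk fun s hs h0 => ?_⟩
    rw [Measure.restrict_apply hs] at h0
    rw [Measure.map_apply measurable_abs hs]
    have hsub : (fun x : ℝ => |x|) ⁻¹' s ⊆ (s ∩ Set.Ici 0) ∪ (-(s ∩ Set.Ici 0)) := by
      intro x hx
      simp only [Set.mem_preimage] at hx
      rcases le_or_gt 0 x with h | h
      · exact Or.inl ⟨by rwa [abs_of_nonneg h] at hx, h⟩
      · refine Or.inr ?_
        rw [Set.mem_neg]
        exact ⟨by rwa [abs_of_neg h] at hx, by simp; linarith⟩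
    refine le_antisymm (le_trans (measure_mono hsub) ?_) zero_le
    refine le_trans (measure_union_le _ _) ?_
    rw [Measure.measure_neg, h0, add_zero]
  rw [habs]
  exact h1.comp_quasiMeasurePreserving qmp

lemma L_val {F : ℝ → ℝ} (hFint : IntegrableOn F (Set.Ioi 0))
    (hFeven : ∀ s, F (-s) = F s) (hFnn : ∀ s, 0 ≤ F s) :
    ∫⁻ u, ENNReal.ofReal (F u) =
      ENNReal.ofReal (∫ s in Set.Ioi (0:ℝ), F s) + ENNReal.ofReal (∫ s in Set.Ioi (0:ℝ), F s) := by
  have hpos : ∫⁻ u in Set.Ioi (0:ℝ), ENNReal.ofReal (F u) =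
      ENNReal.ofReal (∫ s in Set.Ioi (0:ℝ), F s) :=
    (ofReal_integral_eq_lintegral_ofReal hFint (Filter.Eventually.of_forall fun x => hFnn x)).symm
  have hmap : volume.restrict (Set.Iio (0:ℝ)) =
      Measure.map Neg.neg (volume.restrict (Set.Ioi 0)) := by
    have : (Neg.neg : ℝ → ℝ) ⁻¹' Set.Iio 0 = Set.Ioi 0 := by ext x; simp
    rw [← this, ← Measure.restrict_map measurable_neg measurableSet_Iio,
      Measure.map_neg_eq_self]
  have hneg : ∫⁻ u in Set.Iio (0:ℝ), ENNReal.ofReal (F u) =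
      ∫⁻ u in Set.Ioi (0:ℝ), ENNReal.ofReal (F u) := by
    have hcoe : (Neg.neg : ℝ → ℝ) = ⇑(MeasurableEquiv.neg ℝ) := rfl
    rw [hmap, hcoe, lintegral_map_equiv _ (MeasurableEquiv.neg ℝ)]
    congr 1 with x
    simp [hFeven]
  calc ∫⁻ u, ENNReal.ofReal (F u)
      = (∫⁻ u in Set.Ici (0:ℝ), ENNReal.ofReal (F u)) +
        ∫⁻ u in (Set.Ici (0:ℝ))ᶜ, ENNReal.ofReal (F u) :=
        (lintegral_add_compl _ measurableSet_Ici).symm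
    _ = _ := by
        rw [Set.compl_Ici, ← Measure.restrict_congr_set Ioi_ae_eq_Ici, hpos, hneg, hpos]

lemma ofReal_abs_integral_le {α : Type*} [MeasurableSpace α] {μ : Measure α} (f : α → ℝ) :
    ENNReal.ofReal |∫ x, f x ∂μ| ≤ ∫⁻ x, ENNReal.ofReal |f x| ∂μ := by
  simp only [← Real.norm_eq_abs, ofReal_norm]
  exact enorm_integral_le_lintegral_enorm f

lemma inner_bound {g F : ℝ → ℝ} (hg : IntegrableOn g (Set.Ioi 0)) (hgnn : ∀ x, 0 ≤ g x)
    (hFmeas : AEMeasurable F) (hFnn : ∀ x, 0 ≤ F x) (hFeven : ∀ s, F (-s) = F s)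
    {L : ENNReal} (hL : ∫⁻ u, ENNReal.ofReal (F u) = L) (hLt : L ≠ ⊤)
    (ψ : ℝ → ℝ → ℝ) (s₃ : ℝ)
    (hψ : ∀ s₁ s₂, |ψ s₁ s₂| ≤ F (s₃ - s₂) * g (s₁ - s₂))
    (t : ℝ) (ht : 0 ≤ t) :
    |∫ s₁ in (0:ℝ)..t, ∫ s₂ in (0:ℝ)..s₁, ψ s₁ s₂| ≤ L.toReal * ∫ u in Set.Ioi (0:ℝ), g u := by
  set S : Set ℝ := Set.Ioc 0 t with hSdef
  set Bg : ℝ := ∫ u in Set.Ioi (0:ℝ), g u with hBgdef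
  have hBg0 : 0 ≤ Bg := setIntegral_nonneg measurableSet_Ioi fun x _ => hgnn x
  set Φ : ℝ → ENNReal := fun u => (Set.Ioi (0:ℝ)).indicator (fun v => ENNReal.ofReal (g v)) u
    with hΦdef
  set Ψ : ℝ → ENNReal := fun v => ENNReal.ofReal (F (s₃ - v)) with hΨdef
  have hΦint : ∫⁻ u, Φ u = ENNReal.ofReal Bg := by
    rw [hΦdef]
    simp only []
    rw [lintegral_indicator measurableSet_Ioi,
      ← ofReal_integral_eq_lintegral_ofReal hg (Filter.Eventually.of_forall fun x => hgnn x)]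
  -- pointwise bound for the inner integral
  have hpt : ∀ s₁ ∈ S, ENNReal.ofReal |∫ s₂ in (0:ℝ)..s₁, ψ s₁ s₂| ≤
      ∫⁻ s₂ in S, Φ (s₁ - s₂) * Ψ s₂ := by
    intro s₁ hs₁
    obtain ⟨h0s₁, hs₁t⟩ := hs₁
    rw [intervalIntegral.integral_of_le h0s₁.le]
    refine le_trans (ofReal_abs_integral_le _) ?_
    have step1 : ∫⁻ s₂ in Set.Ioc (0:ℝ) s₁, ENNReal.ofReal |ψ s₁ s₂| ≤
        ∫⁻ s₂ in Set.Ioc (0:ℝ) s₁, ENNReal.ofReal (F (s₃ - s₂) * g (s₁ - s₂)) :=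
      lintegral_mono fun s₂ => ENNReal.ofReal_le_ofReal (hψ s₁ s₂)
    refine le_trans step1 ?_
    rw [← Measure.restrict_congr_set Ioo_ae_eq_Ioc]
    have step2 : ∫⁻ s₂ in Set.Ioo (0:ℝ) s₁, ENNReal.ofReal (F (s₃ - s₂) * g (s₁ - s₂)) =
        ∫⁻ s₂ in Set.Ioo (0:ℝ) s₁, Φ (s₁ - s₂) * Ψ s₂ := by
      refine lintegral_congr_ae ((ae_restrict_iff' measurableSet_Ioo).2
        (Filter.Eventually.of_forall fun s₂ hs₂ => ?_))
      have hmem : s₁ - s₂ ∈ Set.Ioi (0:ℝ) := by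
        simp only [Set.mem_Ioi]; linarith [hs₂.2]
      rw [hΦdef]
      simp only [Set.indicator_of_mem hmem]
      rw [ENNReal.ofReal_mul (hFnn _), mul_comm]
    rw [step2]
    refine lintegral_mono' (Measure.restrict_mono ?_ le_rfl) le_rfl
    intro x hx
    exact ⟨hx.1, le_trans hx.2.le hs₁t⟩
  -- measurability for the swap
  have hΦm : AEMeasurable Φ volume := by
    rw [hΦdef]
    rw [aemeasurable_indicator_iff measurableSet_Ioi]
    exact hg.aemeasurable.ennreal_ofReal
  have hΨm : AEMeasurable Ψ volume := by
    have := hFmeas.comp_quasiMeasurePreserving (quasiMeasurePreserving_sub_left volume s₃)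
    exact this.ennreal_ofReal
  have hprodle : (volume.restrict S).prod (volume.restrict S) ≤
      ((volume : Measure ℝ).prod volume) := by
    rw [Measure.prod_restrict]
    exact Measure.restrict_le_self
  have hsubq : Measure.QuasiMeasurePreserving (fun p : ℝ × ℝ => p.1 - p.2)
      ((volume.restrict S).prod (volume.restrict S)) volume := by
    refine ⟨measurable_fst.sub measurable_snd, ?_⟩
    exact ((Measure.map_mono hprodle (measurable_fst.sub measurable_snd)).absolutelyContinuous).trans
      (quasiMeasurePreserving_sub volume volume).absolutelyContinuous
  have hsndq : Measure.QuasiMeasurePreserving (Prod.snd : ℝ × ℝ → ℝ)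
      ((volume.restrict S).prod (volume.restrict S)) volume := by
    refine ⟨measurable_snd, ?_⟩
    rw [Measure.map_snd_prod]
    exact (Measure.absolutelyContinuous_of_le_smul le_rfl).trans
      Measure.restrict_le_self.absolutelyContinuous
  have hG : AEMeasurable (Function.uncurry fun s₁ s₂ => Φ (s₁ - s₂) * Ψ s₂)
      ((volume.restrict S).prod (volume.restrict S)) := by
    have h1 : AEMeasurable (fun p : ℝ × ℝ => Φ (p.1 - p.2))
        ((volume.restrict S).prod (volume.restrict S)) :=
      hΦm.comp_quasiMeasurePreserving hsubq
    have h2 : AEMeasurable (fun p : ℝ × ℝ => Ψ p.2)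
        ((volume.restrict S).prod (volume.restrict S)) :=
      hΨm.comp_quasiMeasurePreserving hsndq
    exact h1.mul h2
  -- main chain
  have main : ENNReal.ofReal |∫ s₁ in (0:ℝ)..t, ∫ s₂ in (0:ℝ)..s₁, ψ s₁ s₂| ≤
      L * ENNReal.ofReal Bg := by
    rw [intervalIntegral.integral_of_le ht]
    refine le_trans (ofReal_abs_integral_le _) ?_
    have h1 : ∫⁻ s₁ in S, ENNReal.ofReal |∫ s₂ in (0:ℝ)..s₁, ψ s₁ s₂| ≤
        ∫⁻ s₁ in S, ∫⁻ s₂ in S, Φ (s₁ - s₂) * Ψ s₂ := by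
      refine lintegral_mono_ae ((ae_restrict_iff' measurableSet_Ioc).2
        (Filter.Eventually.of_forall fun s₁ hs₁ => hpt s₁ hs₁))
    refine le_trans h1 ?_
    rw [lintegral_lintegral_swap hG]
    have h2 : ∀ s₂ : ℝ, ∫⁻ s₁ in S, Φ (s₁ - s₂) * Ψ s₂ ≤ Ψ s₂ * ENNReal.ofReal Bg := by
      intro s₂
      have : ∫⁻ s₁ in S, Φ (s₁ - s₂) * Ψ s₂ = Ψ s₂ * ∫⁻ s₁ in S, Φ (s₁ - s₂) := by
        simp_rw [mul_comm (Φ _) (Ψ s₂)]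
        exact lintegral_const_mul' _ _ ENNReal.ofReal_ne_top
      rw [this]
      refine mul_le_mul_right ?_ _
      refine le_trans (lintegral_mono' Measure.restrict_le_self le_rfl) ?_
      rw [lintegral_sub_right_eq_self Φ s₂, hΦint]
    refine le_trans (lintegral_mono h2) ?_
    have h3 : ∫⁻ s₂ in S, Ψ s₂ * ENNReal.ofReal Bg = (∫⁻ s₂ in S, Ψ s₂) * ENNReal.ofReal Bg := by
      simp_rw [mul_comm (Ψ _) (ENNReal.ofReal Bg)]
      rw [lintegral_const_mul' _ _ ENNReal.ofReal_ne_top, mul_comm]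
    rw [h3]
    refine mul_le_mul_left ?_ _
    refine le_trans (lintegral_mono' Measure.restrict_le_self le_rfl) (le_of_eq ?_)
    calc ∫⁻ s₂, Ψ s₂ = ∫⁻ s₂, ((fun u => ENNReal.ofReal (F u)) ∘ Neg.neg) (s₂ - s₃) := by
          congr 1 with s₂
          simp only [Function.comp_apply, neg_sub, hΨdef]
      _ = ∫⁻ s₂, ENNReal.ofReal (F (-s₂)) := lintegral_sub_right_eq_self _ s₃
      _ = ∫⁻ s₂, ENNReal.ofReal (F s₂) := by simp only [hFeven]
      _ = L := hL
  -- conclude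
  have hfin : L * ENNReal.ofReal Bg ≠ ⊤ := ENNReal.mul_ne_top hLt ENNReal.ofReal_ne_top
  have := ENNReal.toReal_mono hfin main
  rwa [ENNReal.toReal_ofReal (abs_nonneg _), ENNReal.toReal_mul,
    ENNReal.toReal_ofReal hBg0] at this

lemma outer_bound {a : ℝ → ℝ} (ha : IntegrableOn a (Set.Ioi 0)) (hann : ∀ x, 0 ≤ a x)
    (c D : ℝ → ℝ) (t : ℝ) (ht : 0 ≤ t) (hc : ∀ s, |c s| = a (t - s)) (M : ℝ) (hM : 0 ≤ M)
    (hD : ∀ s, |D s| ≤ M) :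
    |∫ s in (0:ℝ)..t, c s * D s| ≤ (∫ u in Set.Ioi (0:ℝ), a u) * M := by
  have hai : IntervalIntegrable a volume 0 t :=
    (intervalIntegrable_iff_integrableOn_Ioc_of_le ht).2 (ha.mono_set Set.Ioc_subset_Ioi_self)
  have hat : IntervalIntegrable (fun s => a (t - s)) volume 0 t := by
    have h := hai.comp_sub_left t
    simpa using h.symm
  have hbound : IntervalIntegrable (fun s => a (t - s) * M) volume 0 t := hat.mul_const M
  have key : ‖∫ s in (0:ℝ)..t, c s * D s‖ ≤ |∫ s in (0:ℝ)..t, a (t - s) * M| := by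
    refine intervalIntegral.norm_integral_le_abs_of_norm_le ?_ hbound
    refine Filter.Eventually.of_forall fun s => ?_
    rw [Real.norm_eq_abs, abs_mul, hc s]
    exact mul_le_mul_of_nonneg_left (hD s) (hann _)
  have hval : ∫ s in (0:ℝ)..t, a (t - s) * M = (∫ s in (0:ℝ)..t, a s) * M := by
    rw [intervalIntegral.integral_mul_const, intervalIntegral.integral_comp_sub_left a t]
    simp
  have hnn : 0 ≤ ∫ s in (0:ℝ)..t, a (t - s) * M :=
    intervalIntegral.integral_nonneg ht fun s _ => mul_nonneg (hann _) hM
  rw [Real.norm_eq_abs] at key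
  rw [abs_of_nonneg hnn, hval] at key
  refine le_trans key (mul_le_mul_of_nonneg_right ?_ hM)
  rw [intervalIntegral.integral_of_le ht]
  exact setIntegral_mono_set ha (Filter.Eventually.of_forall fun x => hann x)
    (HasSubset.Subset.eventuallyLE Set.Ioc_subset_Ioi_self)

/-- uniform bound on the velocity-correlation integral.  With
componentwise `L¹` bounds `K⋆` on the `N+1` kernels and the dominating bound
`|C̃_{ij}^{mn}(t,t')| < F(t-t')` for `F` positive, even and integrable with
`∫₀^∞ F = f⋆`, the large-time limit of the absolute value of the triple-integral
expression for `∫₀ᵗ ⟨δv^m(t) δv^n(s)⟩ ds` is bounded by `2[(N+1) K⋆ d]² f⋆`. -/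
theorem stmt2 {d N : ℕ}
    (K : Fin (N + 1) → ℝ → Matrix (Fin d) (Fin d) ℝ)
    (Ct : Fin (N + 1) → Fin (N + 1) → ℝ → ℝ → Matrix (Fin d) (Fin d) ℝ)
    (Kstar fstar : ℝ)
    (F : ℝ → ℝ)
    (hKint : ∀ i m n, IntegrableOn (fun s => |K i s m n|) (Set.Ioi 0))
    (hK : ∀ i m n, (∫ s in Set.Ioi (0:ℝ), |K i s m n|) < Kstar)
    (hCF : ∀ i j m n s s', |Ct i j s s' m n| < F (s - s'))
    (hFpos : ∀ s, 0 < F s)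
    (hFeven : ∀ s, F (-s) = F s)
    (hFint : IntegrableOn F (Set.Ioi 0))
    (hfstar : (∫ s in Set.Ioi (0:ℝ), F s) = fstar) :
    ∀ m n,
      Filter.limsup
        (fun t =>
          |∑ i, ∑ j, ∑ l, ∑ k,
            ∫ s₃ in (0:ℝ)..t, ∫ s₁ in (0:ℝ)..t, ∫ s₂ in (0:ℝ)..s₁,
              K i (t - s₃) m l * Ct i j s₃ s₂ l k * K j (s₁ - s₂) n k|)
        Filter.atTop
        < 2 * (((N : ℝ) + 1) * Kstar * (d : ℝ)) ^ 2 * fstar := by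
  intro m n
  haveI hdne : Nonempty (Fin d) := ⟨m⟩
  have hFnn : ∀ s, 0 ≤ F s := fun s => (hFpos s).le
  have hFmeas : AEMeasurable F := even_aemeasurable hFint hFeven
  have hf0 : 0 ≤ fstar := hfstar ▸ setIntegral_nonneg measurableSet_Ioi fun x _ => hFnn x
  have hfpos : 0 < fstar := by
    rw [← hfstar]
    rw [setIntegral_pos_iff_support_of_nonneg_ae
      (Filter.Eventually.of_forall fun x => hFnn x) hFint]
    have : Function.support F ∩ Set.Ioi 0 = Set.Ioi (0:ℝ) := by
      refine Set.inter_eq_self_of_subset_right fun x _ => (hFpos x).ne'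
    rw [this]
    simp [Real.volume_Ioi]
  set L : ENNReal := ENNReal.ofReal fstar + ENNReal.ofReal fstar with hLdef
  have hL : ∫⁻ u, ENNReal.ofReal (F u) = L := by
    rw [L_val hFint hFeven hFnn, hfstar]
  have hLt : L ≠ ⊤ := ENNReal.add_ne_top.2 ⟨ENNReal.ofReal_ne_top, ENNReal.ofReal_ne_top⟩
  have hLtoReal : L.toReal = 2 * fstar := by
    rw [hLdef, ENNReal.toReal_add ENNReal.ofReal_ne_top ENNReal.ofReal_ne_top,
      ENNReal.toReal_ofReal hf0]
    ring
  have hKs0 : 0 < Kstar := lt_of_le_of_lt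
    (setIntegral_nonneg measurableSet_Ioi fun x _ => abs_nonneg _) (hK 0 m m)
  -- per-tuple bound
  have htuple : ∀ t : ℝ, 0 ≤ t → ∀ i j l k,
      |∫ s₃ in (0:ℝ)..t, ∫ s₁ in (0:ℝ)..t, ∫ s₂ in (0:ℝ)..s₁,
        K i (t - s₃) m l * Ct i j s₃ s₂ l k * K j (s₁ - s₂) n k| ≤
      (∫ u in Set.Ioi (0:ℝ), |K i u m l|) *
        (L.toReal * ∫ u in Set.Ioi (0:ℝ), |K j u n k|) := by
    intro t ht i j l k
    have hrw : (fun s₃ => ∫ s₁ in (0:ℝ)..t, ∫ s₂ in (0:ℝ)..s₁,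
        K i (t - s₃) m l * Ct i j s₃ s₂ l k * K j (s₁ - s₂) n k) =
        (fun s₃ => K i (t - s₃) m l *
          ∫ s₁ in (0:ℝ)..t, ∫ s₂ in (0:ℝ)..s₁, Ct i j s₃ s₂ l k * K j (s₁ - s₂) n k) := by
      funext s₃
      simp_rw [mul_assoc, intervalIntegral.integral_const_mul]
    rw [hrw]
    have hBnn : 0 ≤ ∫ u in Set.Ioi (0:ℝ), |K j u n k| :=
      setIntegral_nonneg measurableSet_Ioi fun x _ => abs_nonneg _
    refine outer_bound (hKint i m l) (fun x => abs_nonneg _) _ _ t ht (fun s => rfl) _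
      (mul_nonneg (by positivity) hBnn) ?_
    intro s₃
    refine inner_bound (hKint j n k) (fun x => abs_nonneg _) hFmeas hFnn hFeven hL hLt
      (fun s₁ s₂ => Ct i j s₃ s₂ l k * K j (s₁ - s₂) n k) s₃ ?_ t ht
    intro s₁ s₂
    rw [abs_mul]
    exact mul_le_mul_of_nonneg_right (hCF i j l k s₃ s₂).le (abs_nonneg _)
  -- uniform constant
  set Csum : ℝ := ∑ i : Fin (N + 1), ∑ j : Fin (N + 1), ∑ l : Fin d, ∑ k : Fin d,
    (∫ u in Set.Ioi (0:ℝ), |K i u m l|) *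
      (L.toReal * ∫ u in Set.Ioi (0:ℝ), |K j u n k|) with hCsumdef
  have hub : ∀ t : ℝ, 0 ≤ t →
      |∑ i, ∑ j, ∑ l, ∑ k,
        ∫ s₃ in (0:ℝ)..t, ∫ s₁ in (0:ℝ)..t, ∫ s₂ in (0:ℝ)..s₁,
          K i (t - s₃) m l * Ct i j s₃ s₂ l k * K j (s₁ - s₂) n k| ≤ Csum := by
    intro t ht
    refine le_trans (Finset.abs_sum_le_sum_abs _ _) ?_
    refine Finset.sum_le_sum fun i _ => ?_
    refine le_trans (Finset.abs_sum_le_sum_abs _ _) ?_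
    refine Finset.sum_le_sum fun j _ => ?_
    refine le_trans (Finset.abs_sum_le_sum_abs _ _) ?_
    refine Finset.sum_le_sum fun l _ => ?_
    refine le_trans (Finset.abs_sum_le_sum_abs _ _) ?_
    exact Finset.sum_le_sum fun k _ => htuple t ht i j l k
  have hCsumlt : Csum < 2 * (((N : ℝ) + 1) * Kstar * (d : ℝ)) ^ 2 * fstar := by
    have hterm : ∀ (i j : Fin (N + 1)) (l k : Fin d),
        (∫ u in Set.Ioi (0:ℝ), |K i u m l|) *
          (L.toReal * ∫ u in Set.Ioi (0:ℝ), |K j u n k|) <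
        Kstar * (L.toReal * Kstar) := by
      intro i j l k
      have hA := hK i m l
      have hB := hK j n k
      have hA0 : 0 ≤ ∫ u in Set.Ioi (0:ℝ), |K i u m l| :=
        setIntegral_nonneg measurableSet_Ioi fun x _ => abs_nonneg _
      have hB0 : 0 ≤ ∫ u in Set.Ioi (0:ℝ), |K j u n k| :=
        setIntegral_nonneg measurableSet_Ioi fun x _ => abs_nonneg _
      have h2f : 0 < L.toReal := by rw [hLtoReal]; positivity
      calc (∫ u in Set.Ioi (0:ℝ), |K i u m l|) *
            (L.toReal * ∫ u in Set.Ioi (0:ℝ), |K j u n k|)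
          = L.toReal * ((∫ u in Set.Ioi (0:ℝ), |K i u m l|) *
              ∫ u in Set.Ioi (0:ℝ), |K j u n k|) := by ring
        _ < L.toReal * (Kstar * Kstar) := by
            exact mul_lt_mul_of_pos_left (mul_lt_mul'' hA hB hA0 hB0) h2f
        _ = Kstar * (L.toReal * Kstar) := by ring
    have hlt : Csum < ∑ _i : Fin (N + 1), ∑ _j : Fin (N + 1), ∑ _l : Fin d, ∑ _k : Fin d,
        Kstar * (L.toReal * Kstar) := by
      rw [hCsumdef]
      refine Finset.sum_lt_sum_of_nonempty Finset.univ_nonempty fun i _ => ?_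
      refine Finset.sum_lt_sum_of_nonempty Finset.univ_nonempty fun j _ => ?_
      refine Finset.sum_lt_sum_of_nonempty Finset.univ_nonempty fun l _ => ?_
      exact Finset.sum_lt_sum_of_nonempty Finset.univ_nonempty fun k _ => hterm i j l k
    refine lt_of_lt_of_le hlt (le_of_eq ?_)
    simp only [Finset.sum_const, Finset.card_univ, Fintype.card_fin, nsmul_eq_mul, hLtoReal]
    push_cast
    ring
  -- limsup
  have hev : ∀ᶠ t in Filter.atTop, (fun t =>
      |∑ i, ∑ j, ∑ l, ∑ k,
        ∫ s₃ in (0:ℝ)..t, ∫ s₁ in (0:ℝ)..t, ∫ s₂ in (0:ℝ)..s₁,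
          K i (t - s₃) m l * Ct i j s₃ s₂ l k * K j (s₁ - s₂) n k|) t ≤ Csum :=
    (Filter.eventually_ge_atTop 0).mono fun t ht => hub t ht
  have hcb : Filter.IsCoboundedUnder (· ≤ ·) Filter.atTop (fun t =>
      |∑ i, ∑ j, ∑ l, ∑ k,
        ∫ s₃ in (0:ℝ)..t, ∫ s₁ in (0:ℝ)..t, ∫ s₂ in (0:ℝ)..s₁,
          K i (t - s₃) m l * Ct i j s₃ s₂ l k * K j (s₁ - s₂) n k|) :=
    Filter.isCoboundedUnder_le_of_le Filter.atTop fun t => abs_nonneg _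
  exact lt_of_le_of_lt (Filter.limsup_le_of_le hcb hev) hCsumlt
end

section
/- The function g(Ro) = D₀(1 + 2/(1+4/Ro²)) + C₀[(1+4β/Ro²)² + 4(β−1)²/Ro²]/(1+4/Ro²)², defined for Ro > 0, has derivative g'(Ro) = −[(β²−1)C₀ − 2D₀] · 8 Ro/(Ro²+4)², and hence is monotone on (0,∞): increasing if (β²−1)C₀ < 2D₀ and decreasing if (β²−1)C₀ > 2D₀. -/
/-- the trace of the eddy-diffusivity tensor
`g(Ro) = D₀(1 + 2/(1+4/Ro²)) + C₀[(1+4β/Ro²)² + 4(β−1)²/Ro²]/(1+4/Ro²)²`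
has derivative `g'(Ro) = −[(β²−1)C₀ − 2D₀] · 8Ro/(Ro²+4)²` on `(0,∞)`, hence it
is strictly increasing there if `(β²−1)C₀ < 2D₀` and strictly decreasing if
`(β²−1)C₀ > 2D₀`. -/
theorem stmt13 (D₀ C₀ β : ℝ) (hD₀ : 0 < D₀) (hC₀ : 0 ≤ C₀) (hβ : 0 ≤ β)
    (g : ℝ → ℝ)
    (hg : ∀ Ro : ℝ, 0 < Ro → g Ro =
      D₀ * (1 + 2 / (1 + 4 / Ro ^ 2)) +
        C₀ * ((1 + 4 * β / Ro ^ 2) ^ 2 + 4 * (β - 1) ^ 2 / Ro ^ 2) /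
          (1 + 4 / Ro ^ 2) ^ 2) :
    (∀ Ro : ℝ, 0 < Ro →
        HasDerivAt g
          (-(((β ^ 2 - 1) * C₀ - 2 * D₀) * (8 * Ro / (Ro ^ 2 + 4) ^ 2))) Ro) ∧
      ((β ^ 2 - 1) * C₀ < 2 * D₀ → StrictMonoOn g (Set.Ioi 0)) ∧
      ((β ^ 2 - 1) * C₀ > 2 * D₀ → StrictAntiOn g (Set.Ioi 0)) := by
  set K : ℝ := (β ^ 2 - 1) * C₀ - 2 * D₀ with hK
  -- closed form h
  set h : ℝ → ℝ := fun x => 3 * D₀ + C₀ + 4 * K / (x ^ 2 + 4) with hh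
  have hgh : ∀ x : ℝ, 0 < x → g x = h x := by
    intro x hx
    have hx2 : x ^ 2 ≠ 0 := pow_ne_zero 2 hx.ne'
    have hx24 : x ^ 2 + 4 ≠ 0 := by positivity
    have hd : (1 : ℝ) + 4 / x ^ 2 ≠ 0 := by
      have : (0:ℝ) < 1 + 4 / x ^ 2 := by positivity
      exact this.ne'
    rw [hg x hx, hh, hK]
    field_simp
    ring
  have hderiv : ∀ Ro : ℝ, 0 < Ro →
      HasDerivAt g (-(K * (8 * Ro / (Ro ^ 2 + 4) ^ 2))) Ro := by
    intro Ro hRo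
    have hRo24 : Ro ^ 2 + 4 ≠ 0 := by positivity
    have h1 : HasDerivAt (fun x : ℝ => x ^ 2 + 4) (2 * Ro) Ro := by
      simpa using ((hasDerivAt_pow 2 Ro).add_const 4)
    have h2 : HasDerivAt (fun x : ℝ => (x ^ 2 + 4)⁻¹)
        (-(2 * Ro) / (Ro ^ 2 + 4) ^ 2) Ro := h1.inv hRo24
    have h3 : HasDerivAt h (4 * K * (-(2 * Ro) / (Ro ^ 2 + 4) ^ 2)) Ro := by
      have := (h2.const_mul (4 * K)).const_add (3 * D₀ + C₀)
      simpa [hh, div_eq_mul_inv, mul_comm, mul_assoc, mul_left_comm] using this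
    have h4 : HasDerivAt g (4 * K * (-(2 * Ro) / (Ro ^ 2 + 4) ^ 2)) Ro := by
      apply h3.congr_of_eventuallyEq
      filter_upwards [isOpen_Ioi.mem_nhds (show Ro ∈ Set.Ioi (0:ℝ) from hRo)]
        with x hx
      exact hgh x hx
    convert h4 using 1
    field_simp
    ring
  refine ⟨hderiv, ?_, ?_⟩
  · intro hlt
    have hKneg : K < 0 := by simp [hK]; linarith
    apply strictMonoOn_of_deriv_pos (convex_Ioi 0)
    · intro x hx
      exact ((hderiv x hx).continuousAt).continuousWithinAt
    · intro x hx
      rw [interior_Ioi] at hx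
      have hx0 : (0:ℝ) < x := hx
      rw [(hderiv x hx).deriv]
      have : 0 < 8 * x / (x ^ 2 + 4) ^ 2 := by positivity
      nlinarith
  · intro hgt
    have hKpos : 0 < K := by simp [hK]; linarith
    apply strictAntiOn_of_deriv_neg (convex_Ioi 0)
    · intro x hx
      exact ((hderiv x hx).continuousAt).continuousWithinAt
    · intro x hx
      rw [interior_Ioi] at hx
      have hx0 : (0:ℝ) < x := hx
      rw [(hderiv x hx).deriv]
      have : 0 < 8 * x / (x ^ 2 + 4) ^ 2 := by positivity
      nlinarith
end
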